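/- Let S be a Stallings section for an m-epi π : Ã* → G and let g ∈ G. Then there exists a finite trim Ã-automaton C with a single initial state and a single terminal state such that S_g ⊆ (L(C))‾ ⊆ gπ⁻¹; equivalently, S_g ⊆ (L(C))‾ and (L(C))π = {g}. -/
import Mathlib


/-!  Common framework: words over an involutive alphabet Ã = A ∪ A⁻¹ (modelled as
`α × Bool`), free reduction, matched epimorphisms, Stallings sections and
Ã-automata, following Silva–Soler-Escrivà–Ventura. -/

/-- A word over the involutive alphabet Ã = A ∪ A⁻¹: the letter `(a, tt)` denotes
`a` and `(a, ff)` denotes `a⁻¹` (the `FreeGroup` convention). -/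
abbrev Word (α : Type) : Type := List (α × Bool)

namespace Stallings

instance {β : Type} : HasSubset (Language β) := ⟨fun L M => ∀ w ∈ L, w ∈ M⟩
instance {β : Type} : Union (Language β) := ⟨fun L M => {w | w ∈ L ∨ w ∈ M}⟩
instance {β : Type} : Inter (Language β) := ⟨fun L M => {w | w ∈ L ∧ w ∈ M}⟩
instance {β : Type} : EmptyCollection (Language β) := ⟨(∅ : Set (List β))⟩

variable {α : Type} {G : Type} [Group G]

/-- The formal inverse of a letter of Ã. -/
def letterInv (x : α × Bool) : α × Bool := (x.1, !x.2)

/-- The formal inverse `w⁻¹` of a word over Ã. -/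
def wordInv (w : Word α) : Word α := (w.map letterInv).reverse

/-- The free reduction `w̄` of a word over Ã (iterated deletion of factors `a a⁻¹`). -/
noncomputable def redW (w : Word α) : Word α :=
  letI := Classical.decEq α
  FreeGroup.reduce w

/-- The reduction `L̄` of a language over Ã. -/
noncomputable def red (L : Language (α × Bool)) : Language (α × Bool) :=
  redW '' L

/-- The set `R_A` of reduced words over Ã. -/
noncomputable def Reduced : Language (α × Bool) := {w | redW w = w}

/-- Evaluation of a monoid homomorphism `π : Ã* → G` at a word. -/
def ev (π : FreeMonoid (α × Bool) →* G) (w : Word α) : G :=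
  π (FreeMonoid.ofList w)

/-- The image of a language under (evaluation of) `π`. -/
def evImg (π : FreeMonoid (α × Bool) →* G) (L : Language (α × Bool)) : Set G :=
  {g | ∃ w ∈ L, ev π w = g}

/-- A matched epimorphism (m-epi) `π : Ã* → G`: a surjective monoid homomorphism
sending formal inverses to inverses. -/
structure IsMEpi (π : FreeMonoid (α × Bool) →* G) : Prop where
  surjective : Function.Surjective π
  matched : ∀ (a : α) (b : Bool),
    π (FreeMonoid.of (a, !b)) = (π (FreeMonoid.of (a, b)))⁻¹

/-- `S_X = Xπ⁻¹ ∩ S`, for `X ⊆ G`. -/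
def sub (S : Language (α × Bool)) (π : FreeMonoid (α × Bool) →* G) (X : Set G) :
    Language (α × Bool) :=
  {w ∈ S | ev π w ∈ X}

/-- A Stallings section for an m-epi `π : Ã* → G`: a regular section `S ⊆ R_A`
such that each `S_g` is regular (S1), and `S_{gh} ⊆ (S_g S_h)‾` (S2). -/
structure IsStallingsSection (π : FreeMonoid (α × Bool) →* G)
    (S : Language (α × Bool)) : Prop where
  regular : S.IsRegular
  reduced : S ⊆ Reduced
  inv_mem : ∀ w ∈ S, wordInv w ∈ S
  exists_rep : ∀ g : G, ∃ w ∈ S, ev π w = g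
  s1 : ∀ g : G, (sub S π {g}).IsRegular
  s2 : ∀ g h : G, sub S π {g * h} ⊆ red (sub S π {g} * sub S π {h})

/-- A group has a Stallings section if some m-epi onto it (from the free monoid on
an involutive finite alphabet) admits a Stallings section. -/
def HasStallingsSection (G : Type) [Group G] : Prop :=
  ∃ (α : Type) (π : FreeMonoid (α × Bool) →* G) (S : Language (α × Bool)),
    Finite α ∧ IsMEpi π ∧ IsStallingsSection π S

/-- `Pref L`: the set of prefixes of words of `L`. -/
def Pref (L : Language (α × Bool)) : Language (α × Bool) :=
  {u | ∃ v, u ++ v ∈ L}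

/-- An extendable Stallings section: every `u ∈ S` admits a reduced word `v` with
`u vⁿ ∈ S` for all `n` and `u ∈ Pref (S_{(u vⁿ u⁻¹)π})` for almost all `n`. -/
def Extendable (π : FreeMonoid (α × Bool) →* G) (S : Language (α × Bool)) : Prop :=
  ∀ u ∈ S, ∃ v : Word α, v ∈ Reduced ∧
    (∀ n : ℕ, u ++ (List.replicate n v).flatten ∈ S) ∧
    ∃ N : ℕ, ∀ n ≥ N, u ∈ Pref (sub S π {ev π u * (ev π v) ^ n * (ev π u)⁻¹})

/-- An Ã-automaton with state type `Q`, initial state `start`, terminal states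
`accept` and edge set `edges`. -/
structure Automaton (β : Type) (Q : Type) where
  start : Q
  accept : Set Q
  edges : Set (Q × β × Q)

namespace Automaton

variable {β Q : Type}

/-- `M.Path p w q`: there is a path from `p` to `q` labelled `w`. -/
inductive Path (M : Automaton β Q) : Q → List β → Q → Prop
  | nil (q : Q) : Path M q [] q
  | cons {p q r : Q} {a : β} {w : List β} :
      (p, a, q) ∈ M.edges → Path M q w r → Path M p (a :: w) r

/-- The language recognized by an automaton. -/
def lang (M : Automaton β Q) : Language β :=
  {w | ∃ t ∈ M.accept, M.Path M.start w t}

/-- A trim automaton: every state lies on some successful path. -/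
def Trim (M : Automaton β Q) : Prop :=
  ∀ q : Q, ∃ (u v : List β) (t : Q), t ∈ M.accept ∧ M.Path M.start u q ∧ M.Path q v t

/-- An involutive Ã-automaton. -/
def Involutive {α : Type} (M : Automaton (α × Bool) Q) : Prop :=
  ∀ p a q, (p, a, q) ∈ M.edges → (q, letterInv a, p) ∈ M.edges

/-- A deterministic automaton. -/
def Deterministic (M : Automaton β Q) : Prop :=
  ∀ p a q q', (p, a, q) ∈ M.edges → (p, a, q') ∈ M.edges → q = q'

/-- An inverse automaton: involutive, deterministic, trim, with a single
terminal state. -/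
def IsInverse {α : Type} (M : Automaton (α × Bool) Q) : Prop :=
  M.Involutive ∧ M.Deterministic ∧ M.Trim ∧ ∃ t : Q, M.accept = {t}

/-- The automaton obtained by identifying the states `p` and `q` (the quotient is
realized on the same state type, redirecting `q` to `p`). -/
def merge [DecidableEq Q] (M : Automaton β Q) (p q : Q) : Automaton β Q :=
  let f : Q → Q := fun x => if x = q then p else x
  { start := f M.start
    accept := f '' M.accept
    edges := {e | ∃ e' ∈ M.edges, e = (f e'.1, e'.2.1, f e'.2.2)} }

end Automaton

end Stallings

namespace Stallings

section Aux

variable {α G : Type} [Group G]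

lemma ev_append (π : FreeMonoid (α × Bool) →* G) (u v : Word α) :
    ev π (u ++ v) = ev π u * ev π v := by
  unfold ev
  rw [FreeMonoid.ofList_append, map_mul]

lemma ev_nil (π : FreeMonoid (α × Bool) →* G) : ev π ([] : Word α) = 1 := map_one π

lemma ev_singleton (π : FreeMonoid (α × Bool) →* G) (a : α × Bool) :
    ev π [a] = π (FreeMonoid.of a) := by
  unfold ev
  rw [FreeMonoid.ofList_singleton]

lemma ev_step (π : FreeMonoid (α × Bool) →* G) (hπ : IsMEpi π) {w1 w2 : Word α}
    (h : FreeGroup.Red.Step w1 w2) : ev π w1 = ev π w2 := by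
  cases h with
  | @not L₁ L₂ x b =>
    have hsplit : ((x, b) :: (x, !b) :: L₂ : Word α) = [(x, b)] ++ ([(x, !b)] ++ L₂) := rfl
    rw [hsplit, ev_append, ev_append, ev_append, ev_append, ev_singleton, ev_singleton,
      hπ.matched x b]
    group

lemma ev_redW (π : FreeMonoid (α × Bool) →* G) (hπ : IsMEpi π) (w : Word α) :
    ev π (redW w) = ev π w := by
  classical
  have hred : FreeGroup.Red w (redW w) := by
    unfold redW
    exact FreeGroup.reduce.red
  have : ∀ {w2 : Word α}, FreeGroup.Red w w2 → ev π w = ev π w2 := by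
    intro w2 h
    induction h with
    | refl => rfl
    | tail _ h2 ih => exact ih.trans (ev_step π hπ h2)
  exact (this hred).symm

theorem path_append {β Q : Type} {M : Automaton β Q} {p q : Q} {u : List β}
    (h1 : M.Path p u q) :
    ∀ {v : List β} {r : Q}, M.Path q v r → M.Path p (u ++ v) r := by
  induction h1 with
  | nil => intro v r h2; exact h2
  | cons he _ ih => intro v r h2; exact .cons he (ih h2)

theorem path_map {β Q R : Type} {M : Automaton β Q} {N : Automaton β R} (f : Q → R)
    (hf : ∀ p a q, (p, a, q) ∈ M.edges → (f p, a, f q) ∈ N.edges)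
    {p q : Q} {w : List β} (h : M.Path p w q) : N.Path (f p) w (f q) := by
  induction h with
  | nil => exact .nil _
  | cons he _ ih => exact .cons (hf _ _ _ he) ih

end Aux

end Stallings

open Stallings in
/-- Let `S` be a Stallings section for the m-epi `π` and `g ∈ G`.
There is a finite trim Ã-automaton `C` with a single initial state and a single
terminal state such that `S_g ⊆ (L(C))‾ ⊆ gπ⁻¹`. -/
theorem exists_uniterminal_automaton {α G : Type} [Finite α] [Group G]
    (π : FreeMonoid (α × Bool) →* G) (hπ : IsMEpi π)
    (S : Language (α × Bool)) (hS : IsStallingsSection π S) (g : G) :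
    ∃ (Q : Type) (_ : Fintype Q) (M : Automaton (α × Bool) Q) (t : Q),
      M.accept = {t} ∧ M.Trim ∧
      sub S π {g} ⊆ red M.lang ∧ ∀ w ∈ red M.lang, ev π w = g := by
  classical
  obtain ⟨σ, fσ, M, hM⟩ := hS.s1 g
  -- the Ã-automaton associated to the DFA `M`
  let A0 : Automaton (α × Bool) σ :=
    { start := M.start, accept := M.accept, edges := {e | e.2.2 = M.step e.1 e.2.1} }
  have pathA0 : ∀ (w : Word α) (p q : σ), A0.Path p w q ↔ M.evalFrom p w = q := by
    intro w
    induction w with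
    | nil =>
      intro p q
      constructor
      · intro h; cases h; rfl
      · rintro rfl; exact .nil p
    | cons a w ih =>
      intro p q
      constructor
      · intro h
        cases h with
        | cons he hp =>
          have : _ = M.step p a := he
          rw [show M.evalFrom p (a :: w) = M.evalFrom (M.step p a) w from rfl, ← this]
          exact (ih _ _).1 hp
      · intro h
        refine Automaton.Path.cons (show (p, a, M.step p a) ∈ A0.edges from rfl) ?_
        exact (ih _ _).2 h
  have langA0 : ∀ w : Word α, w ∈ A0.lang ↔ w ∈ sub S π {g} := by
    intro w
    rw [← hM]
    constructor
    · rintro ⟨t, ht, hp⟩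
      have := (pathA0 w _ _).1 hp
      exact (DFA.mem_accepts M).2 (by rw [DFA.eval, this]; exact ht)
    · intro hw
      exact ⟨M.eval w, (DFA.mem_accepts M).1 hw, (pathA0 w _ _).2 rfl⟩
  -- key fact: along successful paths, evaluation gives `g`
  have key : ∀ (q : σ) (u v : Word α) (t : σ), A0.Path A0.start u q → t ∈ A0.accept →
      A0.Path q v t → ev π u * ev π v = g := by
    intro q u v t hu ht hv
    have hmem : u ++ v ∈ A0.lang := ⟨t, ht, path_append hu hv⟩
    have := ((langA0 _).1 hmem).2
    rw [ev_append] at this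
    exact this
  -- `S_g` is nonempty
  obtain ⟨w0, hw0S, hw0g⟩ := hS.exists_rep g
  have hw0 : w0 ∈ A0.lang := (langA0 w0).2 ⟨hw0S, hw0g⟩
  obtain ⟨t0, ht0, hp0⟩ := hw0
  -- the trim part
  let Acc : σ → Prop := fun q =>
    (∃ u, A0.Path A0.start u q) ∧ ∃ v t, t ∈ A0.accept ∧ A0.Path q v t
  have hstart : Acc A0.start := ⟨⟨[], .nil _⟩, w0, t0, ht0, hp0⟩
  let A1 : Automaton (α × Bool) {q : σ // Acc q} :=
    { start := ⟨A0.start, hstart⟩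
      accept := {q | q.1 ∈ A0.accept}
      edges := {e | (e.1.1, e.2.1, e.2.2.1) ∈ A0.edges} }
  have lift : ∀ {p : σ} {w : Word α} {q : σ}, A0.Path p w q →
      ∀ u0, A0.Path A0.start u0 p → ∀ v0 t, t ∈ A0.accept → A0.Path q v0 t →
      ∀ (hp : Acc p) (hq : Acc q), A1.Path ⟨p, hp⟩ w ⟨q, hq⟩ := by
    intro p w q h
    induction h with
    | nil q => intro u0 hu0 v0 t ht hv0 hp hq; exact .nil _
    | @cons p1 q1 r1 a w1 he hpath ih =>
      intro u0 hu0 v0 t ht hv0 hp hq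
      have hq1 : Acc q1 :=
        ⟨⟨u0 ++ [a], path_append hu0 (.cons he (.nil _))⟩, w1 ++ v0, t, ht,
          path_append hpath hv0⟩
      exact .cons (show ((⟨p1, hp⟩ : {q : σ // Acc q}), a, (⟨q1, hq1⟩ : {q : σ // Acc q})) ∈
        A1.edges from he) (ih (u0 ++ [a]) (path_append hu0 (.cons he (.nil _))) v0 t ht hv0 hq1 hq)
  -- merge all terminal states into a single one
  let NQ := {q : {q : σ // Acc q} // q.1 ∉ A0.accept} ⊕ Unit
  let f : {q : σ // Acc q} → NQ := fun q =>
    if h : q.1 ∈ A0.accept then Sum.inr () else Sum.inl ⟨q, h⟩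
  let C : Automaton (α × Bool) NQ :=
    { start := f A1.start
      accept := {Sum.inr ()}
      edges := {e | ∃ e' ∈ A1.edges, e = (f e'.1, e'.2.1, f e'.2.2)} }
  have fmap : ∀ p a q, (p, a, q) ∈ A1.edges → (f p, a, f q) ∈ C.edges :=
    fun p a q h => ⟨(p, a, q), h, rfl⟩
  -- the value function on states
  let val : {q : σ // Acc q} → G := fun q => ev π q.2.1.choose
  have val_spec : ∀ (q : {q : σ // Acc q}) (v : Word α) (t : σ), t ∈ A0.accept →
      A0.Path q.1 v t → val q * ev π v = g :=
    fun q v t ht hv => key q.1 _ v t q.2.1.choose_spec ht hv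
  have val_eq : ∀ (q : {q : σ // Acc q}) (u : Word α), A0.Path A0.start u q.1 →
      val q = ev π u := by
    intro q u hu
    obtain ⟨v, t, ht, hv⟩ := q.2.2
    have h1 := val_spec q v t ht hv
    have h2 := key q.1 u v t hu ht hv
    exact mul_right_cancel (h1.trans h2.symm)
  have val_start : val A1.start = 1 :=
    (val_eq A1.start [] (.nil _)).trans (ev_nil π)
  have val_accept : ∀ q : {q : σ // Acc q}, q.1 ∈ A0.accept → val q = g := by
    intro q h
    have := val_spec q [] q.1 h (.nil _)
    rwa [ev_nil, mul_one] at this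
  let valC : NQ → G := fun s => Sum.rec (fun q => val q.1) (fun _ => g) s
  have valC_f : ∀ q : {q : σ // Acc q}, valC (f q) = val q := by
    intro q
    by_cases h : q.1 ∈ A0.accept
    · show valC (f q) = val q
      rw [show f q = Sum.inr () from dif_pos h]
      exact (val_accept q h).symm
    · rw [show f q = Sum.inl ⟨q, h⟩ from dif_neg h]
  have edge_val : ∀ e ∈ C.edges, valC e.2.2 = valC e.1 * ev π [e.2.1] := by
    rintro e ⟨⟨p, a, q⟩, he, rfl⟩
    obtain ⟨vq, t, ht, hvq⟩ := q.2.2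
    have h1 := val_spec q vq t ht hvq
    have h2 : A0.Path p.1 (a :: vq) t := .cons he hvq
    have h3 := val_spec p (a :: vq) t ht h2
    rw [show (a :: vq : Word α) = [a] ++ vq from rfl, ev_append, ← mul_assoc] at h3
    show valC (f q) = valC (f p) * ev π [a]
    rw [valC_f, valC_f]
    exact mul_right_cancel (h1.trans h3.symm)
  have path_val : ∀ {s : NQ} {w : Word α} {t' : NQ}, C.Path s w t' →
      valC t' = valC s * ev π w := by
    intro s w t' h
    induction h with
    | nil => rw [ev_nil, mul_one]
    | @cons p q r a w he _ ih =>
      rw [ih, edge_val (p, a, q) he, show (a :: w : Word α) = [a] ++ w from rfl, ev_append,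
        mul_assoc]
  have evC : ∀ w ∈ C.lang, ev π w = g := by
    rintro w ⟨t', ht', hp⟩
    have h := path_val hp
    have ht'' : t' = Sum.inr () := ht'
    rw [ht''] at h
    have hstartv : valC C.start = 1 := by
      show valC (f A1.start) = 1
      rw [valC_f, val_start]
    rw [hstartv, one_mul] at h
    exact h.symm
  have subset1 : ∀ w ∈ sub S π {g}, w ∈ C.lang := by
    intro w hw
    obtain ⟨t, ht, hp⟩ := (langA0 w).2 hw
    have hAccT : Acc t := ⟨⟨w, hp⟩, [], t, ht, .nil _⟩
    have h1 : A1.Path A1.start w ⟨t, hAccT⟩ := lift hp [] (.nil _) [] t ht (.nil _) _ _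
    have h2 : C.Path C.start w (f ⟨t, hAccT⟩) := path_map f fmap h1
    have hft : f ⟨t, hAccT⟩ = Sum.inr () := dif_pos ht
    rw [hft] at h2
    exact ⟨Sum.inr (), rfl, h2⟩
  have trimC : C.Trim := by
    rintro (⟨q, hq⟩ | u)
    · obtain ⟨⟨u, hu⟩, v, t, ht, hv⟩ := q.2
      have hAccT : Acc t := ⟨⟨u ++ v, path_append hu hv⟩, [], t, ht, .nil _⟩
      have h1 : A1.Path A1.start u q := lift hu [] (.nil _) v t ht hv _ _
      have h2 : A1.Path q v ⟨t, hAccT⟩ := lift hv u hu [] t ht (.nil _) _ _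
      have h1' : C.Path C.start u (f q) := path_map f fmap h1
      have h2' : C.Path (f q) v (f ⟨t, hAccT⟩) := path_map f fmap h2
      have hfq : f q = Sum.inl ⟨q, hq⟩ := dif_neg hq
      have hft : f ⟨t, hAccT⟩ = Sum.inr () := dif_pos ht
      rw [hfq] at h1' h2'
      rw [hft] at h2'
      exact ⟨u, v, Sum.inr (), rfl, h1', h2'⟩
    · have hAccT : Acc t0 := ⟨⟨w0, hp0⟩, [], t0, ht0, .nil _⟩
      have h1 : A1.Path A1.start w0 ⟨t0, hAccT⟩ := lift hp0 [] (.nil _) [] t0 ht0 (.nil _) _ _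
      have h1' : C.Path C.start w0 (f ⟨t0, hAccT⟩) := path_map f fmap h1
      have hft : f ⟨t0, hAccT⟩ = Sum.inr () := dif_pos ht0
      rw [hft] at h1'
      refine ⟨w0, [], Sum.inr (), rfl, ?_, .nil _⟩
      cases u
      exact h1'
  haveI : Fintype σ := fσ
  haveI : Finite NQ := by
    have : Finite {q : {q : σ // Acc q} // q.1 ∉ A0.accept} := Subtype.finite
    infer_instance
  refine ⟨NQ, Fintype.ofFinite NQ, C, Sum.inr (), rfl, trimC, ?_, ?_⟩
  · intro w hw
    exact ⟨w, subset1 w hw, hS.reduced w hw.1⟩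
  · rintro w ⟨w', hw', rfl⟩
    rw [ev_redW π hπ]
    exact evC w' hw'
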